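/- If μ is doubling and supports a p-Poincaré inequality, then the homogeneous Newton-Sobolev space HN^{1,p}(X) = D^{1,p}(X)/∼, where f₁ ∼ f₂ iff ‖f₁ − f₂‖_{D^{1,p}(X)} = 0, equipped with the quotient norm induced by ‖·‖_{D^{1,p}(X)}, is a complete normed space (a Banach space). -/

import Mathlib

open MeasureTheory ENNReal NNReal Set Metric Filter

noncomputable section

/-- A (compact rectifiable) curve in a metric space `X`, given by a `1`-Lipschitz
(arclength-type) parametrization on the interval `[0, len]`. -/
structure Curve (X : Type*) [MetricSpace X] where
  toFun : ℝ → X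
  len : ℝ
  len_nonneg : 0 ≤ len
  lip : LipschitzOnWith 1 toFun (Set.Icc 0 len)

namespace Curve

variable {X : Type*} [MetricSpace X]

/-- The curve (line) integral `∫_γ g ds` of a nonnegative Borel function. -/
def integral (γ : Curve X) (g : X → ℝ≥0∞) : ℝ≥0∞ :=
  ∫⁻ t in Set.Icc (0 : ℝ) γ.len, g (γ.toFun t)

/-- A curve is nonconstant if it attains at least two distinct values. -/
def Nonconstant (γ : Curve X) : Prop :=
  ∃ s ∈ Set.Icc (0 : ℝ) γ.len, ∃ t ∈ Set.Icc (0 : ℝ) γ.len, γ.toFun s ≠ γ.toFun t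

end Curve

variable {X : Type*} [MetricSpace X] [MeasurableSpace X] [BorelSpace X]

/-- `g` is an upper gradient of `f`: for every rectifiable curve `γ`,
`|f(γ(b)) - f(γ(a))| ≤ ∫_γ g ds`. -/
def IsUpperGradient (f : X → ℝ) (g : X → ℝ≥0∞) : Prop :=
  Measurable g ∧ ∀ γ : Curve X,
    ENNReal.ofReal |f (γ.toFun γ.len) - f (γ.toFun 0)| ≤ γ.integral g

/-- The family `Γ` of curves has `p`-modulus zero: there is a nonnegative Borel `ρ`
with `∫ ρ^p dμ < ∞` and `∫_γ ρ ds = ∞` for every `γ ∈ Γ`. -/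
def ModZero (μ : Measure X) (p : ℝ) (Γ : Set (Curve X)) : Prop :=
  ∃ ρ : X → ℝ≥0∞, Measurable ρ ∧ (∫⁻ x, ρ x ^ p ∂μ) < ∞ ∧ ∀ γ ∈ Γ, γ.integral ρ = ∞

/-- The family of nonconstant compact rectifiable curves meeting a set `E`. -/
def CurvesMeeting (E : Set X) : Set (Curve X) :=
  {γ | γ.Nonconstant ∧ ∃ t ∈ Set.Icc (0 : ℝ) γ.len, γ.toFun t ∈ E}

/-- A set `E` is `p`-exceptional if `μ E = 0` and the family of nonconstant
compact rectifiable curves meeting `E` has `p`-modulus zero. -/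
def PExceptional (μ : Measure X) (p : ℝ) (E : Set X) : Prop :=
  μ E = 0 ∧ ModZero μ p (CurvesMeeting E)

/-- The homogeneous `D^{1,p}` seminorm: infimum of `(∫ g^p dμ)^{1/p}` over upper gradients. -/
def eLpSeminormD (μ : Measure X) (p : ℝ) (f : X → ℝ) : ℝ≥0∞ :=
  ⨅ (g : X → ℝ≥0∞) (_ : IsUpperGradient f g), (∫⁻ x, g x ^ p ∂μ) ^ (1 / p)

/-- Membership in the homogeneous Newton-Sobolev class `D^{1,p}(X)`:
`f` has an upper gradient `g` with `∫ g^p dμ < ∞`. -/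
def MemD1p (μ : Measure X) (p : ℝ) (f : X → ℝ) : Prop :=
  ∃ g : X → ℝ≥0∞, IsUpperGradient f g ∧ (∫⁻ x, g x ^ p ∂μ) < ∞

/-- The `N^{1,p}` norm: `(∫ |f|^p dμ)^{1/p} + inf_g (∫ g^p dμ)^{1/p}`. -/
def normN1p (μ : Measure X) (p : ℝ) (f : X → ℝ) : ℝ≥0∞ :=
  (∫⁻ x, ENNReal.ofReal |f x| ^ p ∂μ) ^ (1 / p) + eLpSeminormD μ p f

/-- All balls have positive and finite measure. -/
def BallsPosFinite (μ : Measure X) : Prop :=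
  ∀ (x : X) (r : ℝ), 0 < r → 0 < μ (Metric.ball x r) ∧ μ (Metric.ball x r) < ∞

/-- The measure `μ` is doubling. -/
def DoublingMeasure (μ : Measure X) : Prop :=
  ∃ Cd : ℝ≥0, ∀ (x : X) (r : ℝ), 0 < r →
    μ (Metric.ball x (2 * r)) ≤ Cd * μ (Metric.ball x r)

/-- The `p`-Poincaré inequality with constants `C` and `lam`. -/
def PoincareIneq (μ : Measure X) (p C lam : ℝ) : Prop :=
  ∀ (f : X → ℝ) (g : X → ℝ≥0∞), Measurable f → IsUpperGradient f g →
    ∀ (x : X) (r : ℝ), 0 < r →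
      (⨍⁻ y in Metric.ball x r,
          ENNReal.ofReal |f y - ⨍ z in Metric.ball x r, f z ∂μ| ∂μ) ≤
        ENNReal.ofReal (C * r) *
          (⨍⁻ y in Metric.ball x (lam * r), g y ^ p ∂μ) ^ (1 / p)

/-- The `(p,p)`-Poincaré inequality with constants `C₀` and `lam₀`. -/
def PoincarePP (μ : Measure X) (p C₀ lam₀ : ℝ) : Prop :=
  ∀ (f : X → ℝ) (g : X → ℝ≥0∞), Measurable f → IsUpperGradient f g →
    (∫⁻ x, g x ^ p ∂μ) < ∞ →
    ∀ (x : X) (r : ℝ), 0 < r →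
      (⨍⁻ y in Metric.ball x r,
          ENNReal.ofReal |f y - ⨍ z in Metric.ball x r, f z ∂μ| ^ p ∂μ) ^ (1 / p) ≤
        ENNReal.ofReal (C₀ * r) *
          (⨍⁻ y in Metric.ball x (lam₀ * r), g y ^ p ∂μ) ^ (1 / p)


section Aux10

variable {μ : Measure X} {p : ℝ}

private lemma curve_aemeas (γ : Curve X) {g : X → ℝ≥0∞} (hg : Measurable g) :
    AEMeasurable (fun t => g (γ.toFun t)) (volume.restrict (Set.Icc 0 γ.len)) :=
  hg.comp_aemeasurable (γ.lip.continuousOn.aemeasurable measurableSet_Icc)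

private lemma curve_integral_add (γ : Curve X) {g g' : X → ℝ≥0∞} (hg : Measurable g) :
    γ.integral (fun x => g x + g' x) = γ.integral g + γ.integral g' :=
  lintegral_add_left' (curve_aemeas γ hg) _

private lemma ug_add {f f' : X → ℝ} {g g' : X → ℝ≥0∞}
    (hf : IsUpperGradient f g) (hf' : IsUpperGradient f' g') :
    IsUpperGradient (fun x => f x + f' x) (fun x => g x + g' x) := by
  refine ⟨hf.1.add hf'.1, fun γ => ?_⟩
  rw [curve_integral_add γ hf.1]
  calc ENNReal.ofReal |f (γ.toFun γ.len) + f' (γ.toFun γ.len) - (f (γ.toFun 0) + f' (γ.toFun 0))|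
      ≤ ENNReal.ofReal (|f (γ.toFun γ.len) - f (γ.toFun 0)| +
          |f' (γ.toFun γ.len) - f' (γ.toFun 0)|) := by
        apply ENNReal.ofReal_le_ofReal
        calc |f (γ.toFun γ.len) + f' (γ.toFun γ.len) - (f (γ.toFun 0) + f' (γ.toFun 0))|
            = |(f (γ.toFun γ.len) - f (γ.toFun 0)) + (f' (γ.toFun γ.len) - f' (γ.toFun 0))| := by
              ring_nf
          _ ≤ _ := abs_add_le _ _
    _ = ENNReal.ofReal |f (γ.toFun γ.len) - f (γ.toFun 0)| +
          ENNReal.ofReal |f' (γ.toFun γ.len) - f' (γ.toFun 0)| :=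
        ENNReal.ofReal_add (abs_nonneg _) (abs_nonneg _)
    _ ≤ _ := add_le_add (hf.2 γ) (hf'.2 γ)

private lemma ug_neg {f : X → ℝ} {g : X → ℝ≥0∞} (hf : IsUpperGradient f g) :
    IsUpperGradient (fun x => -f x) g := by
  refine ⟨hf.1, fun γ => ?_⟩
  show ENNReal.ofReal |(-f (γ.toFun γ.len)) - (-f (γ.toFun 0))| ≤ γ.integral g
  have h : (-f (γ.toFun γ.len)) - (-f (γ.toFun 0)) = f (γ.toFun 0) - f (γ.toFun γ.len) := by ring
  rw [h, abs_sub_comm]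
  exact hf.2 γ

private lemma ug_seminorm_le {f : X → ℝ} {g : X → ℝ≥0∞} (h : IsUpperGradient f g) :
    eLpSeminormD μ p f ≤ (∫⁻ x, g x ^ p ∂μ) ^ (1 / p) :=
  iInf₂_le g h

private lemma exists_ug_of_lt {f : X → ℝ} {c : ℝ≥0∞} (h : eLpSeminormD μ p f < c) :
    ∃ g, IsUpperGradient f g ∧ (∫⁻ x, g x ^ p ∂μ) ^ (1 / p) < c := by
  obtain ⟨g, hg⟩ := iInf_lt_iff.mp h
  by_cases hug : IsUpperGradient f g
  · exact ⟨g, hug, by rwa [iInf_pos hug] at hg⟩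
  · rw [iInf_neg hug] at hg
    exact absurd hg not_top_lt

private lemma Lp_tsum_le (hp : 1 ≤ p) {g : ℕ → X → ℝ≥0∞} (hg : ∀ i, Measurable (g i)) :
    (∫⁻ x, (∑' i, g i x) ^ p ∂μ) ^ (1 / p) ≤ ∑' i, (∫⁻ x, g i x ^ p ∂μ) ^ (1 / p) := by
  have hp0 : 0 < p := lt_of_lt_of_le one_pos hp
  have hmeasP : ∀ n, Measurable fun x => ∑ i ∈ Finset.range n, g i x :=
    fun n => Finset.measurable_sum _ fun i _ => hg i
  have hmono : ∀ {a b : ℕ}, a ≤ b → ∀ x,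
      (∑ i ∈ Finset.range a, g i x) ≤ ∑ i ∈ Finset.range b, g i x :=
    fun hab x => Finset.sum_le_sum_of_subset (Finset.range_subset_range.2 hab)
  have key : ∀ n, (∫⁻ x, (∑ i ∈ Finset.range n, g i x) ^ p ∂μ) ^ (1 / p) ≤
      ∑ i ∈ Finset.range n, (∫⁻ x, g i x ^ p ∂μ) ^ (1 / p) := by
    intro n
    induction n with
    | zero =>
      simp only [Finset.range_zero, Finset.sum_empty]
      rw [ENNReal.zero_rpow_of_pos hp0, lintegral_zero,
        ENNReal.zero_rpow_of_pos (by positivity : (0:ℝ) < 1 / p)]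
    | succ n ih =>
      have hstep := ENNReal.lintegral_Lp_add_le (μ := μ)
        (hmeasP n).aemeasurable (hg n).aemeasurable hp
      have hco : ∫⁻ x, ((fun x => ∑ i ∈ Finset.range n, g i x) + g n) x ^ p ∂μ
          = ∫⁻ x, (∑ i ∈ Finset.range (n+1), g i x) ^ p ∂μ :=
        lintegral_congr fun x => by simp [Finset.sum_range_succ]
      rw [hco] at hstep
      refine hstep.trans ?_
      rw [Finset.sum_range_succ]
      exact add_le_add ih le_rfl
  have hpt : ∀ x, (∑' i, g i x) ^ p = ⨆ n, (∑ i ∈ Finset.range n, g i x) ^ p := by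
    intro x
    refine (iSup_eq_of_tendsto ?_ ?_).symm
    · exact fun a b hab => ENNReal.rpow_le_rpow (hmono hab x) hp0.le
    · exact (ENNReal.continuous_rpow_const.tendsto _).comp (ENNReal.tendsto_nat_tsum _)
  have hintsup : ∫⁻ x, (∑' i, g i x) ^ p ∂μ =
      ⨆ n, ∫⁻ x, (∑ i ∈ Finset.range n, g i x) ^ p ∂μ := by
    simp_rw [hpt]
    refine lintegral_iSup (fun n => ENNReal.continuous_rpow_const.measurable.comp (hmeasP n)) ?_
    exact fun a b hab x => ENNReal.rpow_le_rpow (hmono hab x) hp0.le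
  rw [hintsup]
  have hC : ∀ n, (∫⁻ x, (∑ i ∈ Finset.range n, g i x) ^ p ∂μ) ≤
      (∑' i, (∫⁻ x, g i x ^ p ∂μ) ^ (1 / p)) ^ p := by
    intro n
    have h1 : (∫⁻ x, (∑ i ∈ Finset.range n, g i x) ^ p ∂μ) ^ (1 / p) ≤
        ∑' i, (∫⁻ x, g i x ^ p ∂μ) ^ (1 / p) := (key n).trans (ENNReal.sum_le_tsum _)
    calc (∫⁻ x, (∑ i ∈ Finset.range n, g i x) ^ p ∂μ)
        = ((∫⁻ x, (∑ i ∈ Finset.range n, g i x) ^ p ∂μ) ^ (1 / p)) ^ p := by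
          rw [← ENNReal.rpow_mul, one_div, inv_mul_cancel₀ hp0.ne', ENNReal.rpow_one]
      _ ≤ _ := ENNReal.rpow_le_rpow h1 hp0.le
  calc (⨆ n, ∫⁻ x, (∑ i ∈ Finset.range n, g i x) ^ p ∂μ) ^ (1 / p)
      ≤ ((∑' i, (∫⁻ x, g i x ^ p ∂μ) ^ (1 / p)) ^ p) ^ (1 / p) :=
        ENNReal.rpow_le_rpow (iSup_le hC) (by positivity)
    _ = ∑' i, (∫⁻ x, g i x ^ p ∂μ) ^ (1 / p) := by
        rw [← ENNReal.rpow_mul, mul_one_div, div_self hp0.ne', ENNReal.rpow_one]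

end Aux10

set_option maxHeartbeats 2000000 in
/-- completeness of the homogeneous Newton-Sobolev space `HN^{1,p}(X)`:
every Cauchy sequence with respect to the `D^{1,p}` seminorm (i.e. every Cauchy
sequence of the quotient space with its quotient norm) converges. -/
theorem stmt10 (μ : Measure X) [μ.Regular] (p : ℝ) (hp : 1 ≤ p)
    (hballs : BallsPosFinite μ) (hdbl : DoublingMeasure μ)
    (hPI : ∃ C > (0 : ℝ), ∃ lam ≥ (1 : ℝ), PoincareIneq μ p C lam)
    (u : ℕ → X → ℝ) (hm : ∀ k, Measurable (u k)) (hu : ∀ k, MemD1p μ p (u k))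
    (hcauchy : ∀ ε : ℝ, 0 < ε → ∃ N : ℕ, ∀ m ≥ N, ∀ n ≥ N,
      eLpSeminormD μ p (fun x => u m x - u n x) < ENNReal.ofReal ε) :
    ∃ v : X → ℝ, MemD1p μ p v ∧
      Filter.Tendsto (fun k => eLpSeminormD μ p (fun x => u k x - v x))
        Filter.atTop (nhds 0) := by
  classical
  have hp0 : 0 < p := lt_of_lt_of_le one_pos hp
  -- choose a rapidly Cauchy subsequence
  choose M hM using fun j : ℕ => hcauchy ((1/2) ^ j) (by positivity)
  set k : ℕ → ℕ := fun j => (Finset.range (j+1)).sup M with hk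
  have hkM : ∀ j, M j ≤ k j := fun j => Finset.le_sup (Finset.self_mem_range_succ j)
  have hkmono : Monotone k := fun a b hab =>
    Finset.sup_mono (Finset.range_subset_range.2 (Nat.succ_le_succ hab))
  set w : ℕ → X → ℝ := fun j x => u (k (j+1)) x - u (k j) x with hw
  have hwsem : ∀ j, eLpSeminormD μ p (w j) < ENNReal.ofReal ((1/2) ^ j) := fun j =>
    hM j (k (j+1)) (le_trans (hkM j) (hkmono (Nat.le_succ j))) (k j) (hkM j)
  choose g hgug hgN using fun j => exists_ug_of_lt (hwsem j)
  -- basic numerics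
  set q : ℝ≥0∞ := ENNReal.ofReal (1/2) with hqdef
  have hq2 : q = 2⁻¹ := by
    rw [hqdef, show (1/2 : ℝ) = (2:ℝ)⁻¹ by norm_num, ENNReal.ofReal_inv_of_pos two_pos,
      ENNReal.ofReal_ofNat]
  have hofq : ∀ m : ℕ, ENNReal.ofReal ((1/2 : ℝ) ^ m) = q ^ m := fun m =>
    ENNReal.ofReal_pow (by norm_num) m
  have hqgeom : ∑' i : ℕ, q ^ i = 2 := by
    rw [hq2, ENNReal.tsum_geometric, ENNReal.one_sub_inv_two, inv_inv]
  have hqne0 : ∀ m : ℕ, q ^ m ≠ 0 := fun m => by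
    rw [hq2]; exact pow_ne_zero m (by simp)
  have hqnetop : ∀ m : ℕ, q ^ m ≠ ⊤ := fun m => by
    rw [hq2]; exact pow_ne_top (by simp)
  -- the tail gradient sums
  set ρ : ℕ → X → ℝ≥0∞ := fun j x => ∑' i, g (i + j) x with hρ
  have hρmeas : ∀ j, Measurable (ρ j) := fun j =>
    Measurable.ennreal_tsum fun i => (hgug (i + j)).1
  set Np : (X → ℝ≥0∞) → ℝ≥0∞ := fun G => (∫⁻ x, G x ^ p ∂μ) ^ (1/p) with hNp
  have hNppow : ∀ G : X → ℝ≥0∞, (∫⁻ x, G x ^ p ∂μ) = Np G ^ p := by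
    intro G
    rw [hNp]
    rw [← ENNReal.rpow_mul, one_div, inv_mul_cancel₀ hp0.ne', ENNReal.rpow_one]
  have hNpfin : ∀ G : X → ℝ≥0∞, Np G < ⊤ → (∫⁻ x, G x ^ p ∂μ) < ⊤ := by
    intro G hG
    rw [hNppow G]
    exact ENNReal.rpow_lt_top_of_nonneg hp0.le hG.ne
  have hρbd : ∀ j, Np (ρ j) ≤ 2 * q ^ j := by
    intro j
    calc Np (ρ j) ≤ ∑' i, (∫⁻ x, g (i + j) x ^ p ∂μ) ^ (1/p) :=
          Lp_tsum_le hp fun i => (hgug (i + j)).1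
      _ ≤ ∑' i : ℕ, q ^ (i + j) :=
          ENNReal.tsum_le_tsum fun i => le_of_lt (by rw [← hofq]; exact hgN (i + j))
      _ = 2 * q ^ j := by
          simp_rw [pow_add]
          rw [ENNReal.tsum_mul_right, hqgeom]
  -- the candidate upper gradients
  set h : ℕ → X → ℝ≥0∞ := fun j x => ρ j x + q ^ j * ρ 0 x with hh
  have hhmeas : ∀ j, Measurable (h j) := fun j =>
    (hρmeas j).add ((hρmeas 0).const_mul _)
  have hhbd : ∀ j, Np (h j) ≤ 4 * q ^ j := by
    intro j
    have h1 : Np (h j) ≤ Np (ρ j) + Np (fun x => q ^ j * ρ 0 x) := by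
      have := ENNReal.lintegral_Lp_add_le (μ := μ) (hρmeas j).aemeasurable
        (((hρmeas 0).const_mul (q ^ j)).aemeasurable) hp
      exact this
    have h2 : Np (fun x => q ^ j * ρ 0 x) = q ^ j * Np (ρ 0) := by
      rw [hNp]
      simp only
      simp_rw [ENNReal.mul_rpow_of_nonneg _ _ hp0.le]
      rw [lintegral_const_mul' _ _ (by
        exact ENNReal.rpow_ne_top_of_nonneg hp0.le (hqnetop j)),
        ENNReal.mul_rpow_of_nonneg _ _ (by positivity : (0:ℝ) ≤ 1/p),
        ← ENNReal.rpow_mul, mul_one_div, div_self hp0.ne', ENNReal.rpow_one]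
    calc Np (h j) ≤ Np (ρ j) + Np (fun x => q ^ j * ρ 0 x) := h1
      _ = Np (ρ j) + q ^ j * Np (ρ 0) := by rw [h2]
      _ ≤ 2 * q ^ j + q ^ j * (2 * q ^ 0) := add_le_add (hρbd j) (mul_le_mul_right (hρbd 0) _)
      _ = 4 * q ^ j := by rw [pow_zero]; ring
  -- curve integrals of tails
  have hint : ∀ (γ : Curve X) (j : ℕ), ∑' i, γ.integral (g (i + j)) = γ.integral (ρ j) := by
    intro γ j
    show ∑' i, γ.integral (g (i + j)) = ∫⁻ t in Set.Icc (0:ℝ) γ.len, ρ j (γ.toFun t)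
    rw [show (fun t => ρ j (γ.toFun t)) = fun t => ∑' i, g (i + j) (γ.toFun t) from rfl]
    rw [lintegral_tsum fun i => curve_aemeas γ (hgug (i + j)).1]
    rfl
  -- telescoping
  have htel : ∀ j x, u (k j) x = u (k 0) x + ∑ i ∈ Finset.range j, w i x := by
    intro j
    induction j with
    | zero => intro x; simp
    | succ n ih =>
      intro x
      have h1 : u (k (n+1)) x = u (k n) x + w n x := by rw [hw]; ring
      rw [h1, ih x, Finset.sum_range_succ]; ring
  -- the equivalence relation generated by curves of finite ρ 0 integral
  set R : X → X → Prop := fun x y => ∃ γ : Curve X,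
    γ.toFun 0 = x ∧ γ.toFun γ.len = y ∧ γ.integral (ρ 0) ≠ ⊤ with hR
  set s : Setoid X := Relation.EqvGen.setoid R with hs
  set rep : X → X := fun x => (Quotient.mk s x).out with hrepdef
  have hrep_rel : ∀ x, Relation.EqvGen R x (rep x) := by
    intro x
    have := Quotient.mk_out (s := s) x
    exact Relation.EqvGen.symm _ _ this
  have hrep_eq : ∀ {a b : X}, R a b → rep a = rep b := by
    intro a b hab
    have : Quotient.mk s a = Quotient.mk s b := Quotient.sound (Relation.EqvGen.rel _ _ hab)
    simp only [hrepdef, this]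
  -- summability along the equivalence
  have key : ∀ {a b : X}, Relation.EqvGen R a b → Summable (fun i => |w i a - w i b|) := by
    intro a b hab
    induction hab with
    | rel x y hxy =>
      obtain ⟨γ, h0, h1, hfin⟩ := hxy
      have hb : ∀ i, ENNReal.ofReal |w i x - w i y| ≤ γ.integral (g i) := by
        intro i
        have h2 := (hgug i).2 γ
        rw [h0, h1] at h2
        rwa [abs_sub_comm] at h2
      have hsum : ∑' i, ENNReal.ofReal |w i x - w i y| ≠ ⊤ := by
        refine ne_top_of_le_ne_top ?_ (ENNReal.tsum_le_tsum hb)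
        rw [show ∑' i, γ.integral (g i) = γ.integral (ρ 0) from hint γ 0]
        exact hfin
      have hsum2 : Summable fun i => (|w i x - w i y|).toNNReal :=
        ENNReal.tsum_coe_ne_top_iff_summable.mp (by
          have he : ∀ i, (((|w i x - w i y|).toNNReal : ℝ≥0) : ℝ≥0∞) =
              ENNReal.ofReal |w i x - w i y| := fun i => rfl
          simp_rw [he]
          exact hsum)
      have h4 : Summable fun i => ((|w i x - w i y|).toNNReal : ℝ) :=
        NNReal.summable_coe.mpr hsum2
      have h5 : (fun i => ((|w i x - w i y|).toNNReal : ℝ)) =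
          fun i => |w i x - w i y| := by
        funext i; exact Real.coe_toNNReal _ (abs_nonneg _)
      rwa [h5] at h4
    | refl x =>
      have hz : (fun i : ℕ => |w i x - w i x|) = fun _ => (0:ℝ) := by funext i; simp
      rw [hz]; exact summable_zero
    | symm x y _ ih => simpa [abs_sub_comm] using ih
    | trans x y z _ _ ih1 ih2 =>
      refine Summable.of_nonneg_of_le (fun i => abs_nonneg _)
        (fun i => abs_sub_le (w i x) (w i y) (w i z)) ?_
      exact ih1.add ih2
  -- the limit function
  set v : X → ℝ := fun x => u (k 0) x + ∑' i, (w i x - w i (rep x)) with hv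
  -- main upper gradient property
  have main : ∀ j, IsUpperGradient (fun x => v x - u (k j) x) (h j) := by
    intro j
    refine ⟨hhmeas j, fun γ => ?_⟩
    by_cases hfin : γ.integral (ρ 0) = ⊤
    · have htop : γ.integral (h j) = ⊤ := by
        have hle : γ.integral (fun x => q ^ j * ρ 0 x) ≤ γ.integral (h j) :=
          lintegral_mono fun t => le_add_self
        have heq : γ.integral (fun x => q ^ j * ρ 0 x) = ⊤ := by
          show ∫⁻ t in Set.Icc (0:ℝ) γ.len, q ^ j * ρ 0 (γ.toFun t) = ⊤
          rw [lintegral_const_mul' _ _ (hqnetop j)]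
          rw [show ∫⁻ t in Set.Icc (0:ℝ) γ.len, ρ 0 (γ.toFun t) = γ.integral (ρ 0) from rfl,
            hfin]
          exact ENNReal.mul_top (hqne0 j)
        exact top_le_iff.mp (heq ▸ hle)
      rw [htop]
      exact le_top
    · set a := γ.toFun 0 with ha
      set b := γ.toFun γ.len with hb
      have hab : R a b := ⟨γ, rfl, rfl, hfin⟩
      have hcb : rep b = rep a := (hrep_eq hab).symm
      set c := rep a with hc
      have Sa : Summable (fun i => |w i a - w i c|) := key (hrep_rel a)
      have Sb : Summable (fun i => |w i b - w i c|) := by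
        have := key (hrep_rel b)
        rwa [hcb] at this
      have Sa' : Summable (fun i => w i a - w i c) := Summable.of_abs Sa
      have Sb' : Summable (fun i => w i b - w i c) := Summable.of_abs Sb
      have Sdabs : Summable (fun i => |w i b - w i a|) := by
        refine Summable.of_nonneg_of_le (fun i => abs_nonneg _)
          (fun i => abs_sub_le (w i b) (w i c) (w i a)) ?_
        exact Sb.add (by simpa [abs_sub_comm] using Sa)
      have Sd : Summable (fun i => w i b - w i a) := Summable.of_abs Sdabs
      -- identity
      have hid : (v b - u (k j) b) - (v a - u (k j) a) = ∑' i, (w (i + j) b - w (i + j) a) := by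
        have e1 : v b - u (k j) b =
            (∑' i, (w i b - w i c)) - ∑ i ∈ Finset.range j, w i b := by
          rw [hv]
          simp only
          rw [hcb, htel j b]
          ring
        have e2 : v a - u (k j) a =
            (∑' i, (w i a - w i c)) - ∑ i ∈ Finset.range j, w i a := by
          rw [hv]
          simp only
          rw [← hc, htel j a]
          ring
        have e3 : (∑' i, (w i b - w i c)) - (∑' i, (w i a - w i c)) =
            ∑' i, (w i b - w i a) := by
          rw [← Sb'.tsum_sub Sa']
          congr 1
          funext i
          ring
        have e4 := Summable.sum_add_tsum_nat_add (f := fun i => w i b - w i a) j Sd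
        have e5 : ∑ i ∈ Finset.range j, (w i b - w i a) =
            (∑ i ∈ Finset.range j, w i b) - ∑ i ∈ Finset.range j, w i a :=
          Finset.sum_sub_distrib _ _
        rw [e1, e2]
        have e6 : ((∑' i, (w i b - w i c)) - ∑ i ∈ Finset.range j, w i b) -
            ((∑' i, (w i a - w i c)) - ∑ i ∈ Finset.range j, w i a) =
            ((∑' i, (w i b - w i c)) - (∑' i, (w i a - w i c))) -
              ((∑ i ∈ Finset.range j, w i b) - ∑ i ∈ Finset.range j, w i a) := by ring
        rw [e6, e3, ← e5]
        linarith [e4]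
      -- estimate
      have Stail : Summable (fun i => |w (i + j) b - w (i + j) a|) :=
        (_root_.summable_nat_add_iff j).mpr Sdabs
      show ENNReal.ofReal |(v b - u (k j) b) - (v a - u (k j) a)| ≤ γ.integral (h j)
      rw [hid]
      calc ENNReal.ofReal |∑' i, (w (i + j) b - w (i + j) a)|
          ≤ ENNReal.ofReal (∑' i, |w (i + j) b - w (i + j) a|) :=
            ENNReal.ofReal_le_ofReal (by
              have hn := norm_tsum_le_tsum_norm (f := fun i => w (i + j) b - w (i + j) a)
                (by simpa [Real.norm_eq_abs] using Stail)
              simpa [Real.norm_eq_abs] using hn)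
        _ = ∑' i, ENNReal.ofReal |w (i + j) b - w (i + j) a| :=
            ENNReal.ofReal_tsum_of_nonneg (fun i => abs_nonneg _) Stail
        _ ≤ ∑' i, γ.integral (g (i + j)) := by
            refine ENNReal.tsum_le_tsum fun i => ?_
            have h2 := (hgug (i + j)).2 γ
            rwa [← ha, ← hb] at h2
        _ = γ.integral (ρ j) := hint γ j
        _ ≤ γ.integral (h j) := lintegral_mono fun t => le_self_add
  -- conclusion
  refine ⟨v, ?_, ?_⟩
  · obtain ⟨G0, hG0, hG0fin⟩ := hu (k 0)
    refine ⟨fun x => G0 x + h 0 x, ?_, ?_⟩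
    · have h1 := ug_add hG0 (main 0)
      have hfeq : (fun x => u (k 0) x + (v x - u (k 0) x)) = v := by funext x; ring
      rwa [hfeq] at h1
    · apply hNpfin
      have h1 : Np (fun x => G0 x + h 0 x) ≤ Np G0 + Np (h 0) :=
        ENNReal.lintegral_Lp_add_le (μ := μ) hG0.1.aemeasurable (hhmeas 0).aemeasurable hp
      have h2 : Np G0 < ⊤ := ENNReal.rpow_lt_top_of_nonneg (by positivity) hG0fin.ne
      have h3 : Np (h 0) < ⊤ := lt_of_le_of_lt (hhbd 0) (by
        rw [pow_zero, mul_one]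
        norm_num)
      exact lt_of_le_of_lt h1 (ENNReal.add_lt_top.mpr ⟨h2, h3⟩)
  · rw [ENNReal.tendsto_nhds_zero]
    intro ε hε
    obtain ⟨j, hj⟩ : ∃ j : ℕ, 8 * q ^ j ≤ ε := by
      have h8 : Tendsto (fun j : ℕ => 8 * q ^ j) atTop (nhds 0) := by
        have h0 := ENNReal.tendsto_pow_atTop_nhds_zero_of_lt_one
          (show q < 1 by rw [hq2]; simp [ENNReal.inv_lt_one])
        have := ENNReal.Tendsto.const_mul h0 (Or.inr (by norm_num : (8:ℝ≥0∞) ≠ ⊤))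
        simpa using this
      obtain ⟨j, hj⟩ := (h8.eventually_lt_const hε).exists
      exact ⟨j, hj.le⟩
    filter_upwards [eventually_ge_atTop (M j)] with m hm
    have h1 : eLpSeminormD μ p (fun x => u m x - u (k j) x) < q ^ j := by
      have := hM j m hm (k j) (hkM j)
      rwa [hofq j] at this
    obtain ⟨g', hg', hg'N⟩ := exists_ug_of_lt h1
    have hug : IsUpperGradient (fun x => u m x - v x) (fun x => g' x + h j x) := by
      have h2 := ug_neg (main j)
      have h3 := ug_add hg' h2
      have hfeq : (fun x => (u m x - u (k j) x) + -(v x - u (k j) x)) =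
          fun x => u m x - v x := by funext x; ring
      rwa [hfeq] at h3
    calc eLpSeminormD μ p (fun x => u m x - v x)
        ≤ Np (fun x => g' x + h j x) := ug_seminorm_le hug
      _ ≤ Np g' + Np (h j) :=
          ENNReal.lintegral_Lp_add_le (μ := μ) hg'.1.aemeasurable (hhmeas j).aemeasurable hp
      _ ≤ q ^ j + 4 * q ^ j := add_le_add hg'N.le (hhbd j)
      _ = 5 * q ^ j := by ring
      _ ≤ 8 * q ^ j := mul_le_mul_left (by norm_num) _
      _ ≤ ε := hj
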